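/- Let K be an algebraically closed field, I an ideal of K[x_1,...,x_n], and U, V polynomials such that Zero(I) ∩ Zero(U) ⊆ Zero(I) ∩ Zero(V). Then Zero(I : V^∞) ⊆ Zero(I : U^∞). -/

import Mathlib

open MvPolynomial

/-- The common zero set of a set of polynomials. -/
def zeroSet {K : Type*} [CommSemiring K] {n : ℕ} (S : Set (MvPolynomial (Fin n) K)) :
    Set (Fin n → K) :=
  {x | ∀ f ∈ S, MvPolynomial.eval x f = 0}

/-- If `Zero(I) ∩ Zero(U) ⊆ Zero(I) ∩ Zero(V)`, then
`Zero(I : V^∞) ⊆ Zero(I : U^∞)` over an algebraically closed field. -/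
theorem zeroSet_saturation_antitone {K : Type*} [Field K] [IsAlgClosed K] {n : ℕ}
    (I : Ideal (MvPolynomial (Fin n) K)) (U V : MvPolynomial (Fin n) K)
    (h : zeroSet (I : Set (MvPolynomial (Fin n) K)) ∩ zeroSet {U} ⊆
      zeroSet (I : Set (MvPolynomial (Fin n) K)) ∩ zeroSet {V}) :
    zeroSet {g : MvPolynomial (Fin n) K | ∃ m : ℕ, V ^ m * g ∈ I} ⊆
      zeroSet {g : MvPolynomial (Fin n) K | ∃ m : ℕ, U ^ m * g ∈ I} := by
  intro x hx f hf
  obtain ⟨m, hm⟩ := hf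
  -- Step 1: V * f vanishes on the zero locus of I
  have h1 : V * f ∈ MvPolynomial.vanishingIdeal K (MvPolynomial.zeroLocus K I) := by
    rw [MvPolynomial.mem_vanishingIdeal_iff]
    intro y hy
    change eval y (V * f) = 0
    rw [MvPolynomial.mem_zeroLocus_iff] at hy
    by_cases hU : eval y U = 0
    · have := h ⟨fun p hp => hy p hp, by simpa [zeroSet] using hU⟩
      have hV : eval y V = 0 := this.2 V rfl
      simp [hV]
    · have : eval y (U ^ m * f) = 0 := hy _ hm
      rw [map_mul, map_pow, mul_eq_zero] at this
      rcases this with h' | h'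
      · exact absurd (pow_eq_zero_iff'.mp h').1 hU
      · simp [h']
  -- Step 2: Nullstellensatz
  rw [MvPolynomial.vanishingIdeal_zeroLocus_eq_radical, Ideal.mem_radical_iff] at h1
  obtain ⟨k, hk⟩ := h1
  rcases Nat.eq_zero_or_pos k with rfl | hkpos
  · simp only [pow_zero] at hk
    exact hx f ⟨0, by simpa using Ideal.mul_mem_left I f hk⟩
  · have : V ^ k * f ^ k ∈ I := by rwa [← mul_pow]
    have := hx (f ^ k) ⟨k, this⟩
    rw [map_pow] at this
    exact pow_eq_zero_iff hkpos.ne' |>.mp this
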